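/- For every x ∈ ℝⁿ₊ with x ≠ 0, the function Y(t) := ⟨e,x⟩⁻¹ · exp(t(D+Bᵀ)) x converges, as t → ∞, to ζ/⟨e,ζ⟩. -/

import Mathlib

open Matrix Finset Filter

/-- The diagonal matrix of outflows: `D i i = -∑_{j ≠ i} B i j`. -/
noncomputable def Dmat {n : ℕ} (B : Matrix (Fin n) (Fin n) ℝ) : Matrix (Fin n) (Fin n) ℝ :=
  Matrix.diagonal fun i => -∑ j ∈ Finset.univ.erase i, B i j

/-- Strong connectivity of the directed graph with an edge `i → j` whenever `B i j > 0`. -/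
def StronglyConnected {n : ℕ} (B : Matrix (Fin n) (Fin n) ℝ) : Prop :=
  ∀ i j : Fin n, Relation.ReflTransGen (fun a b => 0 < B a b) i j

open NormedSpace

noncomputable def entryLM (i j : Fin n) : Matrix (Fin n) (Fin n) ℝ →ₗ[ℝ] ℝ where
  toFun M := M i j
  map_add' _ _ := rfl
  map_smul' _ _ := rfl

noncomputable def mulVecLM (v : Fin n → ℝ) : Matrix (Fin n) (Fin n) ℝ →ₗ[ℝ] (Fin n → ℝ) where
  toFun M := M *ᵥ v
  map_add' A B := Matrix.add_mulVec A B v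
  map_smul' c A := Matrix.smul_mulVec c A v

lemma hasSum_exp_entry (M : Matrix (Fin n) (Fin n) ℝ) (i j : Fin n) :
    HasSum (fun k : ℕ => ((k.factorial : ℝ))⁻¹ * (M ^ k) i j) ((exp M) i j) := by
  letI : SeminormedRing (Matrix (Fin n) (Fin n) ℝ) := Matrix.linftyOpSemiNormedRing
  letI : NormedRing (Matrix (Fin n) (Fin n) ℝ) := Matrix.linftyOpNormedRing
  letI : NormedAlgebra ℝ (Matrix (Fin n) (Fin n) ℝ) := Matrix.linftyOpNormedAlgebra
  have h := NormedSpace.exp_series_hasSum_exp' (𝕂 := ℝ) M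
  have h2 := h.map (entryLM i j) (LinearMap.continuous_of_finiteDimensional _)
  convert h2 using 1
  · funext k; simp [entryLM, smul_eq_mul]; rfl
  · rfl

lemma exp_mulVec_of_mulVec_eq_zero (M : Matrix (Fin n) (Fin n) ℝ) (v : Fin n → ℝ)
    (h0 : M *ᵥ v = 0) : exp M *ᵥ v = v := by
  letI : SeminormedRing (Matrix (Fin n) (Fin n) ℝ) := Matrix.linftyOpSemiNormedRing
  letI : NormedRing (Matrix (Fin n) (Fin n) ℝ) := Matrix.linftyOpNormedRing
  letI : NormedAlgebra ℝ (Matrix (Fin n) (Fin n) ℝ) := Matrix.linftyOpNormedAlgebra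
  have h := NormedSpace.exp_series_hasSum_exp' (𝕂 := ℝ) M
  have h2 := h.map (mulVecLM v) (LinearMap.continuous_of_finiteDimensional _)
  have h3 : HasSum (fun k : ℕ => ((k.factorial : ℝ))⁻¹ • (M ^ k *ᵥ v)) (exp M *ᵥ v) := by
    convert h2 using 1
    · funext k; simp [mulVecLM, Matrix.smul_mulVec]
    · rfl
  have heq : (fun k : ℕ => ((k.factorial : ℝ))⁻¹ • (M ^ k *ᵥ v))
      = fun k : ℕ => if k = 0 then v else 0 := by
    funext k
    cases k with
    | zero => simp [Matrix.one_mulVec]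
    | succ m =>
      simp only [pow_succ, ← Matrix.mulVec_mulVec, h0]
      simp
  rw [heq] at h3
  have h4 : HasSum (fun k : ℕ => if k = 0 then v else 0) v := by
    simpa using hasSum_ite_eq (0 : ℕ) v
  exact (h3.unique h4)

section Main

variable (B : Matrix (Fin n) (Fin n) ℝ)

lemma rowsum_zero (hdiag : ∀ i, B i i = 0) (i : Fin n) :
    ∑ j, (Dmat B + B) i j = 0 := by
  have : ∑ j, (Dmat B + B) i j
      = (-∑ j ∈ Finset.univ.erase i, B i j) + ∑ j, B i j := by
    simp [Dmat, Matrix.add_apply, Finset.sum_add_distrib, Matrix.diagonal_apply,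
      Finset.sum_ite_eq']
  rw [this, ← Finset.add_sum_erase _ _ (Finset.mem_univ i), hdiag]
  ring

lemma DB_mulVec_one (hdiag : ∀ i, B i i = 0) :
    (Dmat B + B) *ᵥ (fun _ => (1:ℝ)) = 0 := by
  funext i
  simpa [Matrix.mulVec, dotProduct] using rowsum_zero B hdiag i

lemma colsum_exp (hdiag : ∀ i, B i i = 0) (t : ℝ) (j : Fin n) :
    ∑ i, (exp (t • (Dmat B + B)ᵀ)) i j = 1 := by
  have h0 : (t • (Dmat B + B)ᵀ)ᵀ *ᵥ (fun _ => (1:ℝ)) = 0 := by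
    rw [Matrix.transpose_smul, Matrix.transpose_transpose, Matrix.smul_mulVec,
      DB_mulVec_one B hdiag, smul_zero]
  have h1 := exp_mulVec_of_mulVec_eq_zero _ _ h0
  rw [Matrix.exp_transpose] at h1
  have := congrFun h1 j
  simpa [Matrix.mulVec, dotProduct, Matrix.transpose_apply] using this

end Main

section Pos

variable (B : Matrix (Fin n) (Fin n) ℝ)

/-- offset constant -/
noncomputable def cB : ℝ := 1 + ∑ i, ∑ j, B i j

/-- the nonnegative matrix N = A + c·1 -/
noncomputable def Nmat : Matrix (Fin n) (Fin n) ℝ :=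
  (Dmat B + B)ᵀ + cB B • (1 : Matrix (Fin n) (Fin n) ℝ)

lemma Nmat_off {i j : Fin n} (h : i ≠ j) : Nmat B i j = B j i := by
  simp [Nmat, Dmat, Matrix.add_apply, Matrix.transpose_apply, Matrix.one_apply,
    Matrix.diagonal_apply, h]

lemma Nmat_nonneg (hB : ∀ i j, 0 ≤ B i j) (i j : Fin n) : 0 ≤ Nmat B i j := by
  rcases eq_or_ne i j with rfl | h
  · have h1 : ∑ j ∈ Finset.univ.erase i, B i j ≤ ∑ i, ∑ j, B i j := by
      calc ∑ j ∈ Finset.univ.erase i, B i j ≤ ∑ j, B i j :=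
            Finset.sum_le_sum_of_subset_of_nonneg (Finset.erase_subset _ _)
              (fun j _ _ => hB i j)
        _ ≤ ∑ i, ∑ j, B i j := Finset.single_le_sum (f := fun i => ∑ j, B i j)
              (fun i _ => Finset.sum_nonneg fun j _ => hB i j) (Finset.mem_univ i)
    simp only [Nmat, Dmat, Matrix.add_apply, Matrix.transpose_apply, Matrix.smul_apply,
      Matrix.one_apply_eq, Matrix.diagonal_apply_eq, cB, smul_eq_mul, mul_one]
    linarith [hB i i]
  · rw [Nmat_off B h]; exact hB j i

lemma Nmat_pow_nonneg (hB : ∀ i j, 0 ≤ B i j) (k : ℕ) (i j : Fin n) :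
    0 ≤ ((Nmat B) ^ k) i j := by
  induction k generalizing i j with
  | zero => rcases eq_or_ne i j with rfl | h
            · simp
            · simp [Matrix.one_apply, h]
  | succ m ih =>
      rw [pow_succ, Matrix.mul_apply]
      exact Finset.sum_nonneg fun l _ => mul_nonneg (ih i l) (Nmat_nonneg B hB l j)

lemma Nmat_pow_pos (hB : ∀ i j, 0 ≤ B i j) (hdiag : ∀ i, B i i = 0)
    (hconn : StronglyConnected B) (i j : Fin n) :
    ∃ k : ℕ, 0 < ((Nmat B) ^ k) i j := by
  suffices H : ∀ i' : Fin n, Relation.ReflTransGen (fun a b => 0 < B a b) j i' →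
      ∃ k : ℕ, 0 < ((Nmat B) ^ k) i' j from H i (hconn j i)
  intro i' h
  induction h with
  | refl => exact ⟨0, by simp⟩
  | @tail b c hab hbc ih =>
    obtain ⟨k, hk⟩ := ih
    have hcb : c ≠ b := by
      rintro rfl
      simp [hdiag] at hbc
    have hNcb : 0 < Nmat B c b := by rw [Nmat_off B hcb]; exact hbc
    refine ⟨k + 1, ?_⟩
    rw [pow_succ', Matrix.mul_apply]
    refine Finset.sum_pos' (fun l _ => mul_nonneg ?_ (Nmat_pow_nonneg B hB k l j))
      ⟨b, Finset.mem_univ b, mul_pos hNcb hk⟩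
    exact (Nmat_nonneg B hB c l)

end Pos

section Exp

variable (B : Matrix (Fin n) (Fin n) ℝ)

lemma exp_smul_decomp (t : ℝ) :
    exp (t • (Dmat B + B)ᵀ)
      = Real.exp (-(t * cB B)) • exp (t • Nmat B) := by
  letI : SeminormedRing (Matrix (Fin n) (Fin n) ℝ) := Matrix.linftyOpSemiNormedRing
  letI : NormedRing (Matrix (Fin n) (Fin n) ℝ) := Matrix.linftyOpNormedRing
  letI : NormedAlgebra ℝ (Matrix (Fin n) (Fin n) ℝ) := Matrix.linftyOpNormedAlgebra
  have hA : t • (Dmat B + B)ᵀ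
      = (-(t * cB B)) • (1 : Matrix (Fin n) (Fin n) ℝ) + t • Nmat B := by
    unfold Nmat
    rw [smul_add, smul_smul]
    module
  rw [hA, Matrix.exp_add_of_commute _ _ (((Commute.one_left (t • Nmat B)).smul_left _))]
  have h1 : exp ((-(t * cB B)) • (1 : Matrix (Fin n) (Fin n) ℝ))
      = Real.exp (-(t * cB B)) • (1 : Matrix (Fin n) (Fin n) ℝ) := by
    have hd : ((-(t * cB B)) • (1 : Matrix (Fin n) (Fin n) ℝ))
        = Matrix.diagonal (fun _ => -(t * cB B)) := by
      ext i j; simp [Matrix.one_apply, Matrix.diagonal_apply]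
    rw [hd, Matrix.exp_diagonal]
    ext i j
    simp [Matrix.one_apply, Matrix.diagonal_apply, Real.exp_eq_exp_ℝ]
  rw [h1, smul_mul_assoc, one_mul]

lemma hasSum_expN_entry (t : ℝ) (i j : Fin n) :
    HasSum (fun k : ℕ => ((k.factorial : ℝ))⁻¹ * (t ^ k * ((Nmat B) ^ k) i j))
      ((exp (t • Nmat B)) i j) := by
  have h := hasSum_exp_entry (t • Nmat B) i j
  simpa [smul_pow, Matrix.smul_apply, smul_eq_mul, mul_assoc] using h

lemma exp_entry_nonneg (hB : ∀ i j, 0 ≤ B i j) {t : ℝ} (ht : 0 ≤ t) (i j : Fin n) :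
    0 ≤ (exp (t • (Dmat B + B)ᵀ)) i j := by
  rw [exp_smul_decomp, Matrix.smul_apply, smul_eq_mul]
  refine mul_nonneg (Real.exp_nonneg _) ?_
  refine (hasSum_expN_entry B t i j).nonneg fun k => ?_
  have := Nmat_pow_nonneg B hB k i j
  positivity
  
lemma exp_entry_pos (hB : ∀ i j, 0 ≤ B i j) (hdiag : ∀ i, B i i = 0)
    (hconn : StronglyConnected B) {t : ℝ} (ht : 0 < t) (i j : Fin n) :
    0 < (exp (t • (Dmat B + B)ᵀ)) i j := by
  rw [exp_smul_decomp, Matrix.smul_apply, smul_eq_mul]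
  refine mul_pos (Real.exp_pos _) ?_
  obtain ⟨k, hk⟩ := Nmat_pow_pos B hB hdiag hconn i j
  have hterm : (0:ℝ) < ((k.factorial : ℝ))⁻¹ * (t ^ k * ((Nmat B) ^ k) i j) := by
    have := Nat.factorial_pos k
    positivity
  calc (0:ℝ) < ((k.factorial : ℝ))⁻¹ * (t ^ k * ((Nmat B) ^ k) i j) := hterm
    _ ≤ _ := le_hasSum (hasSum_expN_entry B t i j) k fun k' _ => by
        have := Nmat_pow_nonneg B hB k' i j
        positivity

end Exp

section Contract

variable (B : Matrix (Fin n) (Fin n) ℝ)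

/-- no-expansion in ℓ¹ for nonneg column-stochastic matrices -/
lemma l1_noexpand (S : Matrix (Fin n) (Fin n) ℝ) (hpos : ∀ i j, 0 ≤ S i j)
    (hcol : ∀ j, ∑ i, S i j = 1) (v : Fin n → ℝ) :
    ∑ i, |(S *ᵥ v) i| ≤ ∑ i, |v i| := by
  calc ∑ i, |(S *ᵥ v) i| ≤ ∑ i, ∑ j, S i j * |v j| := by
        refine Finset.sum_le_sum fun i _ => ?_
        have hmv : (S *ᵥ v) i = ∑ j, S i j * v j := rfl
        rw [hmv]
        calc |∑ j, S i j * v j| ≤ ∑ j, |S i j * v j| := Finset.abs_sum_le_sum_abs _ _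
          _ = ∑ j, S i j * |v j| := by
              refine Finset.sum_congr rfl fun j _ => ?_
              rw [abs_mul, abs_of_nonneg (hpos i j)]
    _ = ∑ j, (∑ i, S i j) * |v j| := by
        rw [Finset.sum_comm]
        exact Finset.sum_congr rfl fun j _ => (Finset.sum_mul _ _ _).symm
    _ = ∑ j, |v j| := by simp [hcol]

lemma sum_mulVec (S : Matrix (Fin n) (Fin n) ℝ) (hcol : ∀ j, ∑ i, S i j = 1)
    (v : Fin n → ℝ) : ∑ i, (S *ᵥ v) i = ∑ i, v i := by
  calc ∑ i, (S *ᵥ v) i = ∑ j, (∑ i, S i j) * v j := by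
        simp only [Matrix.mulVec, dotProduct]
        rw [Finset.sum_comm]
        exact Finset.sum_congr rfl fun j _ => (Finset.sum_mul _ _ _).symm
    _ = ∑ j, v j := by simp [hcol]

lemma exists_contraction (hn : 1 ≤ n) (S : Matrix (Fin n) (Fin n) ℝ)
    (hpos : ∀ i j, 0 < S i j) (hcol : ∀ j, ∑ i, S i j = 1) :
    ∃ δ : ℝ, 0 < δ ∧ δ ≤ 1 ∧ ∀ v : Fin n → ℝ, (∑ j, v j = 0) →
      ∑ i, |(S *ᵥ v) i| ≤ (1 - δ) * ∑ i, |v i| := by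
  haveI : NeZero n := ⟨by omega⟩
  have hne : (Finset.univ : Finset (Fin n × Fin n)).Nonempty := Finset.univ_nonempty
  obtain ⟨p, -, hp⟩ := Finset.exists_min_image Finset.univ (fun p : Fin n × Fin n => S p.1 p.2) hne
  set ε : ℝ := S p.1 p.2 with hε
  have hεpos : 0 < ε := hpos _ _
  have hεle : ∀ i j, ε ≤ S i j := fun i j => hp (i, j) (Finset.mem_univ _)
  refine ⟨n * ε, by positivity, ?_, ?_⟩
  · have j0 : Fin n := ⟨0, by omega⟩
    have : (n : ℝ) * ε = ∑ _i : Fin n, ε := by simp [mul_comm]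
    rw [this, ← hcol j0]
    exact Finset.sum_le_sum fun i _ => hεle i j0
  · intro v hv
    have key : ∀ i, |(S *ᵥ v) i| ≤ ∑ j, (S i j - ε) * |v j| := by
      intro i
      have h1 : (S *ᵥ v) i = ∑ j, (S i j - ε) * v j := by
        simp only [Matrix.mulVec, dotProduct, sub_mul]
        rw [Finset.sum_sub_distrib, ← Finset.mul_sum, hv, mul_zero, sub_zero]
      rw [h1]
      calc |∑ j, (S i j - ε) * v j| ≤ ∑ j, |(S i j - ε) * v j| :=
            Finset.abs_sum_le_sum_abs _ _
        _ = ∑ j, (S i j - ε) * |v j| := by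
            refine Finset.sum_congr rfl fun j _ => ?_
            rw [abs_mul, abs_of_nonneg (by linarith [hεle i j])]
    calc ∑ i, |(S *ᵥ v) i| ≤ ∑ i, ∑ j, (S i j - ε) * |v j| :=
          Finset.sum_le_sum fun i _ => key i
      _ = ∑ j, (∑ i, (S i j - ε)) * |v j| := by
          rw [Finset.sum_comm]
          exact Finset.sum_congr rfl fun j _ => (Finset.sum_mul _ _ _).symm
      _ = (1 - n * ε) * ∑ j, |v j| := by
          rw [Finset.mul_sum]
          refine Finset.sum_congr rfl fun j _ => ?_
          rw [Finset.sum_sub_distrib, hcol j]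
          simp [mul_comm]

end Contract

/-- For every `x ∈ ℝⁿ₊`, `x ≠ 0`, the function `Y t = ⟨e,x⟩⁻¹ • exp(t(D+Bᵀ)) x` converges,
as `t → ∞`, to `ζ / ⟨e,ζ⟩`, where `ζ` is a strictly positive eigenvector of `(D+B)ᵀ` for the
eigenvalue `0`. -/
theorem stmt3 {n : ℕ} (hn : 1 ≤ n) (B : Matrix (Fin n) (Fin n) ℝ)
    (hB : ∀ i j, 0 ≤ B i j) (hdiag : ∀ i, B i i = 0)
    (hconn : StronglyConnected B)
    (ζ : Fin n → ℝ) (hζpos : ∀ i, 0 < ζ i) (hζ : (Dmat B + B)ᵀ *ᵥ ζ = 0)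
    (x : Fin n → ℝ) (hx : ∀ i, 0 ≤ x i) (hx0 : x ≠ 0) :
    Tendsto (fun t : ℝ => (∑ i, x i)⁻¹ • (NormedSpace.exp (t • (Dmat B + B)ᵀ) *ᵥ x))
      atTop (nhds ((∑ i, ζ i)⁻¹ • ζ)) := by
  classical
  haveI : NeZero n := ⟨by omega⟩
  set A := (Dmat B + B)ᵀ with hA
  set P : ℝ → Matrix (Fin n) (Fin n) ℝ := fun t => exp (t • A) with hP
  set S := exp ((1:ℝ) • A) with hS
  have hScol : ∀ j, ∑ i, S i j = 1 := colsum_exp B hdiag 1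
  have hSpos : ∀ i j, 0 < S i j := fun i j => exp_entry_pos B hB hdiag hconn one_pos i j
  obtain ⟨δ, hδ0, hδ1, hcontr⟩ := exists_contraction hn S hSpos hScol
  have hPcol : ∀ (t : ℝ) j, ∑ i, P t i j = 1 := fun t => colsum_exp B hdiag t
  have hPnn : ∀ {t : ℝ}, 0 ≤ t → ∀ i j, 0 ≤ P t i j :=
    fun ht i j => exp_entry_nonneg B hB ht i j
  have hζfix : ∀ t : ℝ, P t *ᵥ ζ = ζ := by
    intro t
    apply exp_mulVec_of_mulVec_eq_zero
    rw [Matrix.smul_mulVec, hζ, smul_zero]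
  have hZ : 0 < ∑ i, ζ i :=
    Finset.sum_pos (fun i _ => hζpos i) Finset.univ_nonempty
  have hsx : 0 < ∑ i, x i := by
    obtain ⟨i0, hi0⟩ : ∃ i, 0 < x i := by
      by_contra h; push_neg at h
      exact hx0 (funext fun i => le_antisymm (h i) (hx i))
    exact Finset.sum_pos' (fun i _ => hx i) ⟨i0, Finset.mem_univ _, hi0⟩
  set Z := ∑ i, ζ i with hZdef
  set sx := ∑ i, x i with hsxdef
  set c := sx / Z with hc
  set w := x - c • ζ with hw
  have hwsum : ∑ j, w j = 0 := by
    have : ∑ j, w j = sx - c * Z := by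
      simp [hw, Finset.sum_sub_distrib, Pi.sub_apply, Pi.smul_apply, smul_eq_mul,
        ← Finset.mul_sum, hsxdef, hZdef]
    rw [this, hc]
    field_simp
    ring
  have hdecomp : ∀ t : ℝ, (sx)⁻¹ • (P t *ᵥ x) = (Z)⁻¹ • ζ + (sx)⁻¹ • (P t *ᵥ w) := by
    intro t
    have hx' : x = c • ζ + w := by rw [hw]; abel
    rw [hx', Matrix.mulVec_add, Matrix.mulVec_smul, hζfix, smul_add, smul_smul]
    congr 2
    rw [hc]
    field_simp
  have hstep : ∀ (m : ℕ) (v : Fin n → ℝ), ∑ j, v j = 0 →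
      ∑ i, |((S ^ m) *ᵥ v) i| ≤ (1 - δ) ^ m * ∑ i, |v i| := by
    intro m
    induction m with
    | zero => intro v _; simp
    | succ k ih =>
      intro v hv
      rw [pow_succ, ← Matrix.mulVec_mulVec]
      have hv1 : ∑ j, (S *ᵥ v) j = 0 := by rw [sum_mulVec S hScol v, hv]
      calc ∑ i, |((S ^ k) *ᵥ (S *ᵥ v)) i| ≤ (1 - δ) ^ k * ∑ i, |(S *ᵥ v) i| := ih _ hv1
        _ ≤ (1 - δ) ^ k * ((1 - δ) * ∑ i, |v i|) :=
            mul_le_mul_of_nonneg_left (hcontr v hv) (pow_nonneg (by linarith) k)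
        _ = (1 - δ) ^ (k + 1) * ∑ i, |v i| := by ring
  have hfact : ∀ t : ℝ, 0 ≤ t → P t = P (t - (⌊t⌋₊ : ℝ)) * S ^ (⌊t⌋₊ : ℕ) := by
    intro t ht
    have h1 : t • A = (t - (⌊t⌋₊ : ℝ)) • A + ((⌊t⌋₊ : ℝ)) • A := by
      rw [← add_smul]; ring_nf
    have comm : Commute ((t - (⌊t⌋₊ : ℝ)) • A) (((⌊t⌋₊ : ℝ)) • A) :=
      ((Commute.refl A).smul_left _).smul_right _
    show exp (t • A) = exp ((t - (⌊t⌋₊ : ℝ)) • A) * S ^ (⌊t⌋₊ : ℕ)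
    rw [h1, Matrix.exp_add_of_commute _ _ comm]
    congr 1
    rw [Nat.cast_smul_eq_nsmul, Matrix.exp_nsmul, hS, one_smul]
  have hbound : ∀ t : ℝ, 0 ≤ t →
      ‖P t *ᵥ w‖ ≤ (1 - δ) ^ (⌊t⌋₊ : ℕ) * ∑ i, |w i| := by
    intro t ht
    have hs : (0:ℝ) ≤ t - (⌊t⌋₊ : ℝ) := sub_nonneg.2 (Nat.floor_le ht)
    have hl1 : ∑ i, |(P t *ᵥ w) i| ≤ (1 - δ) ^ (⌊t⌋₊ : ℕ) * ∑ i, |w i| := by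
      rw [hfact t ht, ← Matrix.mulVec_mulVec]
      calc ∑ i, |(P (t - (⌊t⌋₊ : ℝ)) *ᵥ ((S ^ (⌊t⌋₊ : ℕ)) *ᵥ w)) i|
          ≤ ∑ i, |((S ^ (⌊t⌋₊ : ℕ)) *ᵥ w) i| :=
            l1_noexpand _ (hPnn hs) (hPcol _) _
        _ ≤ (1 - δ) ^ (⌊t⌋₊ : ℕ) * ∑ i, |w i| := hstep _ w hwsum
    have hnorm : ‖P t *ᵥ w‖ ≤ ∑ i, |(P t *ᵥ w) i| := by
      refine (pi_norm_le_iff_of_nonneg (Finset.sum_nonneg fun i _ => abs_nonneg _)).2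
        fun i => ?_
      rw [Real.norm_eq_abs]
      exact Finset.single_le_sum (f := fun i => |(P t *ᵥ w) i|)
        (fun i _ => abs_nonneg _) (Finset.mem_univ i)
    exact hnorm.trans hl1
  have hlim : Tendsto (fun t : ℝ => P t *ᵥ w) atTop (nhds 0) := by
    have hg : Tendsto (fun t : ℝ => (1 - δ) ^ (⌊t⌋₊ : ℕ) * ∑ i, |w i|) atTop (nhds 0) := by
      have h1 : Tendsto (fun t : ℝ => (1 - δ) ^ (⌊t⌋₊ : ℕ)) atTop (nhds 0) :=
        (tendsto_pow_atTop_nhds_zero_of_lt_one (by linarith) (by linarith)).comp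
          tendsto_nat_floor_atTop
      simpa using h1.mul_const (∑ i, |w i|)
    have hev : ∀ᶠ t : ℝ in atTop, ‖P t *ᵥ w‖ ≤ (1 - δ) ^ (⌊t⌋₊ : ℕ) * ∑ i, |w i| := by
      filter_upwards [eventually_ge_atTop (0:ℝ)] with t ht
      exact hbound t ht
    exact squeeze_zero_norm' hev hg
  have hlim2 : Tendsto (fun t : ℝ => (sx)⁻¹ • (P t *ᵥ w)) atTop (nhds 0) := by
    simpa using hlim.const_smul (sx⁻¹)
  have final : Tendsto (fun t : ℝ => (Z)⁻¹ • ζ + (sx)⁻¹ • (P t *ᵥ w))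
      atTop (nhds ((Z)⁻¹ • ζ + 0)) := tendsto_const_nhds.add hlim2
  rw [add_zero] at final
  exact final.congr fun t => (hdecomp t).symm
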